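/- arXiv:1310.2524 — 6 statements merged into one kernel-verified Lean document; each statement's English description precedes it below -/
import Mathlib

section
/- Let H be a complex Hilbert space and let A and Q be bounded linear operators on H such that AQ = QA. Then for every natural number n ≥ 2, the operator inequality (((AQ)*)ⁿ(AQ)ⁿ)^{2/n} ≤ ‖A‖⁴ ((Q*)ⁿQⁿ)^{2/n} holds, where for a positive operator S and real exponent r > 0, S^r is defined via continuous functional calculus. -/
open scoped NNReal ENNReal

set_option synthInstance.maxHeartbeats 1000000
set_option maxHeartbeats 1000000

section SR
variable {A : Type*} [NormedRing A] [NormedAlgebra ℂ A]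

lemma sr_swap_le (x y : A) : spectralRadius ℂ (x * y) ≤ spectralRadius ℂ (y * x) := by
  refine iSup₂_le fun k hk => ?_
  rcases eq_or_ne k 0 with rfl | hk0
  · simp
  · have hk' : k ∈ spectrum ℂ (y * x) :=
      ((spectrum.nonzero_mul_comm x y).le ⟨hk, hk0⟩).1
    exact le_iSup₂ (f := fun k (_ : k ∈ spectrum ℂ (y * x)) => (‖k‖₊ : ℝ≥0∞)) k hk'

lemma sr_swap (x y : A) : spectralRadius ℂ (x * y) = spectralRadius ℂ (y * x) :=
  le_antisymm (sr_swap_le x y) (sr_swap_le y x)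
end SR

section LH
variable {A : Type*} [CStarAlgebra A] [PartialOrder A] [StarOrderedRing A]

lemma my_rpow_add_nonneg (a : A) (ha : 0 ≤ a) {s t : ℝ} (hs : 0 ≤ s) (ht : 0 ≤ t) :
    a ^ (s + t) = a ^ s * a ^ t := by
  rcases hs.eq_or_lt with rfl | hs'
  · rw [zero_add, CFC.rpow_zero a ha, one_mul]
  rcases ht.eq_or_lt with rfl | ht'
  · rw [add_zero, CFC.rpow_zero a ha, mul_one]
  have h1 : a ^ s = a ^ s.toNNReal := by
    rw [CFC.nnrpow_eq_rpow (by simpa using hs'), Real.coe_toNNReal _ hs]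
  have h2 : a ^ t = a ^ t.toNNReal := by
    rw [CFC.nnrpow_eq_rpow (by simpa using ht'), Real.coe_toNNReal _ ht]
  have h3 : a ^ (s + t) = a ^ (s.toNNReal + t.toNNReal) := by
    rw [CFC.nnrpow_eq_rpow (add_pos (Real.toNNReal_pos.mpr hs') (Real.toNNReal_pos.mpr ht'))]
    congr 1
    push_cast [Real.coe_toNNReal _ hs, Real.coe_toNNReal _ ht]
    rfl
  rw [h1, h2, h3, CFC.nnrpow_add (by simpa using hs') (by simpa using ht')]

lemma my_nnnorm_rpow_le [Nontrivial A] (a : A) (ha : 0 ≤ a) {r : ℝ} (hr0 : 0 ≤ r) (hr1 : r ≤ 1) :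
    ‖a ^ r‖₊ ≤ 1 ⊔ ‖a‖₊ := by
  rw [CFC.rpow_def]
  refine nnnorm_cfc_nnreal_le fun x hx => ?_
  calc x ^ r ≤ (1 ⊔ ‖a‖₊) ^ r :=
        NNReal.rpow_le_rpow ((spectrum.le_nnnorm_of_mem hx).trans le_sup_right) hr0
    _ ≤ (1 ⊔ ‖a‖₊) ^ (1 : ℝ) := NNReal.rpow_le_rpow_of_exponent_le le_sup_left hr1
    _ = 1 ⊔ ‖a‖₊ := NNReal.rpow_one _

lemma my_smul_nonneg (c : ℝ≥0) {a : A} (ha : 0 ≤ a) : 0 ≤ c • a := by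
  have hsa : IsSelfAdjoint (CFC.sqrt a) := .of_nonneg (CFC.sqrt_nonneg a)
  have key : c • a = star ((c.sqrt : ℝ) • CFC.sqrt a) * ((c.sqrt : ℝ) • CFC.sqrt a) := by
    rw [star_smul, hsa.star_eq, smul_mul_smul_comm, CFC.sqrt_mul_sqrt_self a ha, star_trivial]
    rw [NNReal.smul_def]
    norm_num [← NNReal.coe_mul]
  rw [key]
  exact star_mul_self_nonneg _

lemma my_smul_le_smul {c d : ℝ≥0} (h : c ≤ d) {a : A} (ha : 0 ≤ a) : c • a ≤ d • a := by
  have h2 : d • a = (d - c) • a + c • a := by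
    rw [← add_smul, tsub_add_cancel_of_le h]
  rw [h2]
  exact le_add_of_nonneg_left (my_smul_nonneg _ ha)

lemma my_smul_rpow (c : ℝ≥0) (a : A) (ha : 0 ≤ a) (r : ℝ) (hr : 0 ≤ r) :
    (c • a) ^ r = c ^ r • a ^ r := by
  have hca : c • a = cfc (fun z : ℝ≥0 => c * z) a := (cfc_const_mul_id c a ha).symm
  have hcont : Continuous (fun z : ℝ≥0 => z ^ r) := NNReal.continuous_rpow_const hr
  rw [CFC.rpow_def, CFC.rpow_def, hca,
    ← cfc_comp' (fun z : ℝ≥0 => z ^ r) (fun z : ℝ≥0 => c * z) a hcont.continuousOn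
      (by fun_prop) ha]
  have h2 : cfc (fun x : ℝ≥0 => (c * x) ^ r) a = cfc (fun x : ℝ≥0 => c ^ r * x ^ r) a :=
    cfc_congr fun x _ => NNReal.mul_rpow
  rw [h2]
  exact cfc_const_mul (c ^ r) (fun z : ℝ≥0 => z ^ r) a hcont.continuousOn

noncomputable def myphi (a : A) (b : Aˣ) (s : ℝ) : ℝ≥0 :=
  ‖(b:A) ^ (-(s/2)) * a ^ s * (b:A) ^ (-(s/2))‖₊

variable {a : A} {b : Aˣ}

lemma bsa (t : ℝ) : IsSelfAdjoint ((b:A) ^ t) := .of_nonneg CFC.rpow_nonneg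
lemma asa (t : ℝ) : IsSelfAdjoint (a ^ t) := .of_nonneg CFC.rpow_nonneg

lemma bmul (hb : 0 ≤ (b:A)) (s t : ℝ) : (b:A) ^ s * (b:A) ^ t = (b:A) ^ (s + t) :=
  (CFC.rpow_add b.isUnit).symm

lemma dnonneg (s : ℝ) : 0 ≤ (b:A) ^ (-(s/2)) * a ^ s * (b:A) ^ (-(s/2)) := by
  have := star_left_conjugate_nonneg (CFC.rpow_nonneg (a := a) (y := s)) ((b:A) ^ (-(s/2)))
  rwa [(bsa _).star_eq] at this

lemma srsa (x : A) (hx : IsSelfAdjoint x) : spectralRadius ℂ x = ‖x‖₊ := by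
  have : IsStarNormal x := hx.isStarNormal
  exact IsStarNormal.spectralRadius_eq_nnnorm x

lemma e1 (hb : 0 ≤ (b:A)) (s : ℝ) :
    (myphi a b s : ℝ≥0∞) = spectralRadius ℂ (a ^ s * (b:A) ^ (-s)) := by
  have h2 : -(s/2) + -(s/2) = -s := by ring
  calc (myphi a b s : ℝ≥0∞)
      = spectralRadius ℂ (((b:A) ^ (-(s/2)) * a ^ s) * (b:A) ^ (-(s/2))) := by
        rw [myphi, srsa _ (.of_nonneg (dnonneg s)), mul_assoc]
    _ = spectralRadius ℂ ((b:A) ^ (-(s/2)) * ((b:A) ^ (-(s/2)) * a ^ s)) := sr_swap _ _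
    _ = spectralRadius ℂ ((b:A) ^ (-s) * a ^ s) := by rw [← mul_assoc, bmul hb, h2]
    _ = spectralRadius ℂ (a ^ s * (b:A) ^ (-s)) := sr_swap _ _

lemma e3 (ha : 0 ≤ a) (hb : 0 ≤ (b:A)) {t : ℝ} (ht : 0 ≤ t) :
    ‖a ^ t * (b:A) ^ (-t)‖₊ ^ 2 = myphi a b (2*t) := by
  have hstar : star (a ^ t * (b:A) ^ (-t)) = (b:A) ^ (-t) * a ^ t := by
    rw [star_mul, (bsa _).star_eq, (asa _).star_eq]
  have hassoc : (a ^ t * (b:A) ^ (-t)) * ((b:A) ^ (-t) * a ^ t)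
      = a ^ t * ((b:A) ^ (-(2*t)) * a ^ t) := by
    rw [mul_assoc, ← mul_assoc ((b:A) ^ (-t)), bmul hb]
    norm_num
    rw [show -t + -t = -(2*t) by ring]
  have hpos : 0 ≤ a ^ t * (b:A) ^ (-(2*t)) * a ^ t := by
    have := star_left_conjugate_nonneg (CFC.rpow_nonneg (a := (b:A)) (y := -(2*t))) (a ^ t)
    rwa [(asa _).star_eq] at this
  have h1 : (‖a ^ t * (b:A) ^ (-t)‖₊ ^ 2 : ℝ≥0∞) = (myphi a b (2*t) : ℝ≥0∞) := by
    calc (‖a ^ t * (b:A) ^ (-t)‖₊ ^ 2 : ℝ≥0∞)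
        = ‖(a ^ t * (b:A) ^ (-t)) * star (a ^ t * (b:A) ^ (-t))‖₊ := by
          rw [CStarRing.nnnorm_self_mul_star, sq]
          push_cast
          ring
      _ = spectralRadius ℂ (a ^ t * ((b:A) ^ (-(2*t)) * a ^ t)) := by
          rw [hstar, hassoc, ← srsa _ (.of_nonneg (by rwa [← mul_assoc]))]
      _ = spectralRadius ℂ (((b:A) ^ (-(2*t)) * a ^ t) * a ^ t) := sr_swap _ _
      _ = spectralRadius ℂ ((b:A) ^ (-(2*t)) * a ^ (2*t)) := by
          rw [mul_assoc, ← my_rpow_add_nonneg a ha ht ht, show t + t = 2*t by ring]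
      _ = spectralRadius ℂ (a ^ (2*t) * (b:A) ^ (-(2*t))) := sr_swap _ _
      _ = (myphi a b (2*t) : ℝ≥0∞) := (e1 hb (2*t)).symm
  exact_mod_cast h1

lemma mykey [Nontrivial A] (ha : 0 ≤ a) (hb : 0 ≤ (b:A)) {s t : ℝ} (hs : 0 ≤ s) (ht : 0 ≤ t) :
    myphi a b (s + t) ^ 2 ≤ myphi a b (2*s) * myphi a b (2*t) := by
  have hsplit : a ^ (s+t) * (b:A) ^ (-(s+t))
      = a ^ s * ((a ^ t * (b:A) ^ (-t)) * (b:A) ^ (-s)) := by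
    rw [my_rpow_add_nonneg a ha hs ht, show -(s+t) = -t + -s by ring, ← bmul hb (-t) (-s)]
    simp only [mul_assoc]
  have hstar : (b:A) ^ (-s) * a ^ s = star (a ^ s * (b:A) ^ (-s)) := by
    rw [star_mul, (bsa _).star_eq, (asa _).star_eq]
  have h1 : (myphi a b (s+t) : ℝ≥0∞) ≤ (‖a ^ t * (b:A) ^ (-t)‖₊ * ‖a ^ s * (b:A) ^ (-s)‖₊ : ℝ≥0) := by
    calc (myphi a b (s+t) : ℝ≥0∞)
        = spectralRadius ℂ (a ^ (s+t) * (b:A) ^ (-(s+t))) := e1 hb (s+t)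
      _ = spectralRadius ℂ (((a ^ t * (b:A) ^ (-t)) * (b:A) ^ (-s)) * a ^ s) := by
          rw [hsplit, sr_swap]
      _ = spectralRadius ℂ ((a ^ t * (b:A) ^ (-t)) * ((b:A) ^ (-s) * a ^ s)) := by
          rw [mul_assoc]
      _ ≤ ‖(a ^ t * (b:A) ^ (-t)) * ((b:A) ^ (-s) * a ^ s)‖₊ :=
          spectrum.spectralRadius_le_nnnorm _
      _ ≤ (‖a ^ t * (b:A) ^ (-t)‖₊ * ‖(b:A) ^ (-s) * a ^ s‖₊ : ℝ≥0) := by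
          exact_mod_cast ENNReal.coe_le_coe.mpr (nnnorm_mul_le _ _)
      _ = (‖a ^ t * (b:A) ^ (-t)‖₊ * ‖a ^ s * (b:A) ^ (-s)‖₊ : ℝ≥0) := by
          rw [hstar, nnnorm_star]
  have h2 : myphi a b (s+t) ≤ ‖a ^ t * (b:A) ^ (-t)‖₊ * ‖a ^ s * (b:A) ^ (-s)‖₊ := by
    exact_mod_cast h1
  calc myphi a b (s+t) ^ 2 ≤ (‖a ^ t * (b:A) ^ (-t)‖₊ * ‖a ^ s * (b:A) ^ (-s)‖₊) ^ 2 :=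
        pow_le_pow_left' h2 2
    _ = ‖a ^ s * (b:A) ^ (-s)‖₊ ^ 2 * ‖a ^ t * (b:A) ^ (-t)‖₊ ^ 2 := by ring
    _ = myphi a b (2*s) * myphi a b (2*t) := by rw [e3 ha hb hs, e3 ha hb ht]

lemma myphi_zero [Nontrivial A] (ha : 0 ≤ a) (hb : 0 ≤ (b:A)) : myphi a b 0 = 1 := by
  rw [myphi, show -((0:ℝ)/2) = 0 by norm_num, CFC.rpow_zero _ hb, CFC.rpow_zero _ ha,
    mul_one, mul_one, nnnorm_one]

lemma myphi_one (ha : 0 ≤ a) (hb : 0 ≤ (b:A)) (hab : a ≤ (b:A)) : myphi a b 1 ≤ 1 := by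
  have h1 : (b:A) ^ (-((1:ℝ)/2)) * a * (b:A) ^ (-((1:ℝ)/2))
      ≤ (b:A) ^ (-((1:ℝ)/2)) * (b:A) * (b:A) ^ (-((1:ℝ)/2)) := by
    have := star_left_conjugate_le_conjugate hab ((b:A) ^ (-((1:ℝ)/2)))
    rwa [(bsa _).star_eq] at this
  have h2 : (b:A) ^ (-((1:ℝ)/2)) * (b:A) * (b:A) ^ (-((1:ℝ)/2)) = 1 := by
    nth_rewrite 2 [← CFC.rpow_one (b:A) hb]
    rw [bmul hb, bmul hb, show -((1:ℝ)/2) + 1 + -((1:ℝ)/2) = 0 by ring, CFC.rpow_zero _ hb]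
  have h3 : myphi a b 1 = ‖(b:A) ^ (-((1:ℝ)/2)) * a * (b:A) ^ (-((1:ℝ)/2))‖₊ := by
    rw [myphi, CFC.rpow_one a ha]
  rw [h3]
  have hd : 0 ≤ (b:A) ^ (-((1:ℝ)/2)) * a * (b:A) ^ (-((1:ℝ)/2)) := by
    have := dnonneg (a := a) (b := b) 1
    rwa [CFC.rpow_one a ha] at this
  exact (CStarAlgebra.nnnorm_le_one_iff_of_nonneg _ hd).mpr (h1.trans_eq h2)

lemma myphi_bound [Nontrivial A] (ha : 0 ≤ a) (hb : 0 ≤ (b:A)) {s : ℝ} (h0 : 0 ≤ s) (h1 : s ≤ 1) :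
    myphi a b s ≤ (1 ⊔ ‖(↑b⁻¹:A)‖₊) * (1 ⊔ ‖a‖₊) * (1 ⊔ ‖(↑b⁻¹:A)‖₊) := by
  have hbinv : (0:A) ≤ ↑b⁻¹ := by
    rw [← CFC.rpow_neg_one_eq_inv b hb]; exact CFC.rpow_nonneg
  have hu : (b:A) ^ (-(s/2)) = (↑b⁻¹:A) ^ (s/2) := CFC.rpow_neg b (s/2) hb
  have hb2 : ‖(↑b⁻¹:A) ^ (s/2)‖₊ ≤ 1 ⊔ ‖(↑b⁻¹:A)‖₊ :=
    my_nnnorm_rpow_le _ hbinv (by linarith) (by linarith)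
  have ha2 : ‖a ^ s‖₊ ≤ 1 ⊔ ‖a‖₊ := my_nnnorm_rpow_le _ ha h0 h1
  rw [myphi, hu]
  calc ‖(↑b⁻¹:A) ^ (s/2) * a ^ s * (↑b⁻¹:A) ^ (s/2)‖₊
      ≤ ‖(↑b⁻¹:A) ^ (s/2) * a ^ s‖₊ * ‖(↑b⁻¹:A) ^ (s/2)‖₊ := nnnorm_mul_le _ _
    _ ≤ ‖(↑b⁻¹:A) ^ (s/2)‖₊ * ‖a ^ s‖₊ * ‖(↑b⁻¹:A) ^ (s/2)‖₊ :=
        mul_le_mul_left (nnnorm_mul_le _ _) _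
    _ ≤ (1 ⊔ ‖(↑b⁻¹:A)‖₊) * (1 ⊔ ‖a‖₊) * (1 ⊔ ‖(↑b⁻¹:A)‖₊) := by
        exact mul_le_mul' (mul_le_mul' hb2 ha2) hb2

lemma myphi_le_one [Nontrivial A] (ha : 0 ≤ a) (hb : 0 ≤ (b:A)) (hab : a ≤ (b:A))
    {r : ℝ} (hr0 : 0 ≤ r) (hr1 : r ≤ 1) : myphi a b r ≤ 1 := by
  set M : ℝ≥0 := (1 ⊔ ‖(↑b⁻¹:A)‖₊) * (1 ⊔ ‖a‖₊) * (1 ⊔ ‖(↑b⁻¹:A)‖₊) with hM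
  have hM1 : (1:ℝ≥0) ≤ M := by
    rw [hM]
    calc (1:ℝ≥0) = 1 * 1 * 1 := by norm_num
      _ ≤ _ := by gcongr <;> exact le_sup_left
  have hind : ∀ k : ℕ, ∀ s : ℝ, 0 ≤ s → s ≤ 1 → myphi a b s ≤ M ^ (((2:ℝ)⁻¹) ^ k) := by
    intro k
    induction k with
    | zero =>
      intro s h0 h1
      simpa using myphi_bound ha hb h0 h1
    | succ k ih =>
      intro s h0 h1
      have hsq : myphi a b s ^ 2 ≤ M ^ (((2:ℝ)⁻¹) ^ k) := by
        rcases le_total s (1/2) with hs | hs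
        · calc myphi a b s ^ 2 = myphi a b (s + 0) ^ 2 := by rw [add_zero]
            _ ≤ myphi a b (2*s) * myphi a b (2*0) := mykey ha hb h0 le_rfl
            _ = myphi a b (2*s) := by rw [mul_zero, myphi_zero ha hb, mul_one]
            _ ≤ M ^ (((2:ℝ)⁻¹) ^ k) := ih (2*s) (by linarith) (by linarith)
        · calc myphi a b s ^ 2 = myphi a b (1/2 + (s - 1/2)) ^ 2 := by norm_num
            _ ≤ myphi a b (2*(1/2)) * myphi a b (2*(s - 1/2)) :=
                mykey ha hb (by norm_num) (by linarith)
            _ = myphi a b 1 * myphi a b (2*(s - 1/2)) := by norm_num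
            _ ≤ 1 * M ^ (((2:ℝ)⁻¹) ^ k) :=
                mul_le_mul' (myphi_one ha hb hab) (ih _ (by linarith) (by linarith))
            _ = M ^ (((2:ℝ)⁻¹) ^ k) := one_mul _
      have h2 : (myphi a b s ^ 2 : ℝ≥0) ^ ((2:ℝ)⁻¹) ≤ (M ^ (((2:ℝ)⁻¹) ^ k)) ^ ((2:ℝ)⁻¹) :=
        NNReal.rpow_le_rpow hsq (by norm_num)
      calc myphi a b s = (myphi a b s ^ 2 : ℝ≥0) ^ ((2:ℝ)⁻¹) := by
            rw [← NNReal.rpow_natCast (myphi a b s) 2, ← NNReal.rpow_mul]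
            norm_num
        _ ≤ (M ^ (((2:ℝ)⁻¹) ^ k)) ^ ((2:ℝ)⁻¹) := h2
        _ = M ^ (((2:ℝ)⁻¹) ^ (k+1)) := by
            rw [← NNReal.rpow_mul, pow_succ]
  have h1 : ∀ k : ℕ, (myphi a b r : ℝ) ≤ (M:ℝ) ^ (((2:ℝ)⁻¹) ^ k) := by
    intro k
    have := hind k r hr0 hr1
    calc (myphi a b r : ℝ) ≤ ((M ^ (((2:ℝ)⁻¹) ^ k) : ℝ≥0) : ℝ) := by exact_mod_cast this
      _ = (M:ℝ) ^ (((2:ℝ)⁻¹) ^ k) := by rw [NNReal.coe_rpow]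
  have h3 : Filter.Tendsto (fun k : ℕ => ((2:ℝ)⁻¹) ^ k) Filter.atTop (nhds 0) :=
    tendsto_pow_atTop_nhds_zero_of_lt_one (by norm_num) (by norm_num)
  have h4 : ContinuousAt (fun x : ℝ => (M:ℝ) ^ x) 0 :=
    Real.continuousAt_const_rpow (by positivity : (M:ℝ) ≠ 0)
  have h5 : Filter.Tendsto (fun k : ℕ => (M:ℝ) ^ (((2:ℝ)⁻¹) ^ k)) Filter.atTop (nhds 1) := by
    have := (h4.tendsto).comp h3
    simpa [Real.rpow_zero, Function.comp_def] using this
  have h6 : (myphi a b r : ℝ) ≤ 1 := ge_of_tendsto h5 (Filter.Eventually.of_forall h1)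
  exact_mod_cast h6

lemma lh_unit [Nontrivial A] (ha : 0 ≤ a) (hb : 0 ≤ (b:A)) (hab : a ≤ (b:A))
    {r : ℝ} (hr0 : 0 ≤ r) (hr1 : r ≤ 1) : a ^ r ≤ (b:A) ^ r := by
  have hd1 : (b:A) ^ (-(r/2)) * a ^ r * (b:A) ^ (-(r/2)) ≤ 1 :=
    (CStarAlgebra.nnnorm_le_one_iff_of_nonneg _ (dnonneg r)).mp
      (myphi_le_one ha hb hab hr0 hr1)
  have h := star_left_conjugate_le_conjugate hd1 ((b:A) ^ (r/2))
  rw [(bsa _).star_eq, mul_one] at h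
  have h01 : (b:A) ^ (r/2) * (b:A) ^ (-(r/2)) = 1 := by
    rw [bmul hb, show r/2 + -(r/2) = 0 by ring, CFC.rpow_zero _ hb]
  have h02 : (b:A) ^ (-(r/2)) * (b:A) ^ (r/2) = 1 := by
    rw [bmul hb, show -(r/2) + r/2 = 0 by ring, CFC.rpow_zero _ hb]
  have hL : (b:A) ^ (r/2) * ((b:A) ^ (-(r/2)) * a ^ r * (b:A) ^ (-(r/2))) * (b:A) ^ (r/2)
      = a ^ r := by
    calc (b:A) ^ (r/2) * ((b:A) ^ (-(r/2)) * a ^ r * (b:A) ^ (-(r/2))) * (b:A) ^ (r/2)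
        = ((b:A) ^ (r/2) * (b:A) ^ (-(r/2))) * a ^ r * ((b:A) ^ (-(r/2)) * (b:A) ^ (r/2)) := by
          simp only [mul_assoc]
      _ = a ^ r := by rw [h01, h02, one_mul, mul_one]
  have hR : (b:A) ^ (r/2) * (b:A) ^ (r/2) = (b:A) ^ r := by
    rw [bmul hb, show r/2 + r/2 = r by ring]
  rwa [hL, hR] at h

lemma lh_general {x y : A} (hx : 0 ≤ x) (hy : 0 ≤ y) (hxy : x ≤ y)
    {r : ℝ} (hr0 : 0 ≤ r) (hr1 : r ≤ 1) : x ^ r ≤ y ^ r := by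
  rcases subsingleton_or_nontrivial A with hsub | hnt
  · exact le_of_eq (Subsingleton.elim _ _)
  rcases hr0.eq_or_lt with rfl | hr
  · rw [CFC.rpow_zero _ hx, CFC.rpow_zero _ hy]
  have halg : ∀ δ : ℝ≥0, (0:A) ≤ algebraMap ℝ≥0 A δ := by
    intro δ
    rw [Algebra.algebraMap_eq_smul_one]
    exact my_smul_nonneg δ zero_le_one
  have main : ∀ ε : ℝ≥0, 0 < ε → x ^ r ≤ y ^ r + algebraMap ℝ≥0 A (ε ^ r) := by
    intro ε hε
    have hyε0 : 0 ≤ y + algebraMap ℝ≥0 A ε := add_nonneg hy (halg ε)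
    have hunit : IsUnit (y + algebraMap ℝ≥0 A ε) :=
      CStarAlgebra.isUnit_of_le _ (le_add_of_nonneg_left hy)
        ⟨halg ε, (algebraMap ℝ≥0 A).isUnit_map hε.ne'.isUnit⟩
    have hxyε : x ≤ y + algebraMap ℝ≥0 A ε :=
      hxy.trans (le_add_of_nonneg_right (halg ε))
    have step1 : x ^ r ≤ (y + algebraMap ℝ≥0 A ε) ^ r := by
      have := lh_unit (b := hunit.unit) hx (by rw [hunit.unit_spec]; exact hyε0)
        (by rw [hunit.unit_spec]; exact hxyε) hr0 hr1
      rwa [hunit.unit_spec] at this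
    have hcont1 : ContinuousOn (fun z : ℝ≥0 => z ^ r) ((fun z : ℝ≥0 => z + ε) '' spectrum ℝ≥0 y) :=
      (NNReal.continuous_rpow_const hr0).continuousOn
    have hces : y + algebraMap ℝ≥0 A ε = cfc (fun z : ℝ≥0 => z + ε) y := by
      have h0 := cfc_add (a := y) (fun z : ℝ≥0 => z) (fun _ => ε) (by fun_prop) (by fun_prop)
      rw [cfc_id' ℝ≥0 y hy, cfc_const ε y hy] at h0
      exact h0.symm
    have step2 : (y + algebraMap ℝ≥0 A ε) ^ r ≤ y ^ r + algebraMap ℝ≥0 A (ε ^ r) := by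
      calc (y + algebraMap ℝ≥0 A ε) ^ r
          = cfc (fun z : ℝ≥0 => (z + ε) ^ r) y := by
            rw [CFC.rpow_def, hces, ← cfc_comp' (fun z : ℝ≥0 => z ^ r) (fun z : ℝ≥0 => z + ε) y
              hcont1 (by fun_prop) hy]
        _ ≤ cfc (fun z : ℝ≥0 => z ^ r + ε ^ r) y := by
            refine cfc_mono (fun z _ => NNReal.rpow_add_le_add_rpow z ε hr0 hr1) ?_ ?_
            · exact ((NNReal.continuous_rpow_const hr0).comp
                (continuous_id.add continuous_const)).continuousOn
            · exact ((NNReal.continuous_rpow_const hr0).add continuous_const).continuousOn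
        _ = y ^ r + algebraMap ℝ≥0 A (ε ^ r) := by
            rw [cfc_add (a := y) (fun z : ℝ≥0 => z ^ r) (fun _ => ε ^ r)
              (NNReal.continuous_rpow_const hr0).continuousOn (by fun_prop),
              cfc_const (ε ^ r) y hy, CFC.rpow_def]
    exact step1.trans step2
  have main' : ∀ δ : ℝ≥0, 0 < δ → x ^ r ≤ y ^ r + algebraMap ℝ≥0 A δ := by
    intro δ hδ
    have h0 := main (δ ^ (r⁻¹ : ℝ)) (NNReal.rpow_pos hδ)
    have h1 : (δ ^ (r⁻¹:ℝ)) ^ r = δ := by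
      rw [← NNReal.rpow_mul, inv_mul_cancel₀ hr.ne', NNReal.rpow_one]
    rwa [h1] at h0
  -- pass to the limit δ → 0⁺
  have hg : Filter.Tendsto (fun δ : ℝ≥0 => y ^ r + algebraMap ℝ≥0 A δ - x ^ r)
      (nhdsWithin 0 (Set.Ioi 0)) (nhds (y ^ r - x ^ r)) := by
    have hc : Continuous (fun δ : ℝ≥0 => y ^ r + algebraMap ℝ≥0 A δ - x ^ r) :=
      (continuous_const.add (continuous_algebraMap ℝ≥0 A)).sub continuous_const
    have := hc.tendsto 0
    simp only [map_zero, add_zero] at this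
    exact this.mono_left nhdsWithin_le_nhds
  have hmem : ∀ᶠ δ in nhdsWithin (0:ℝ≥0) (Set.Ioi 0),
      (y ^ r + algebraMap ℝ≥0 A δ - x ^ r) ∈ {z : A | 0 ≤ z} := by
    filter_upwards [self_mem_nhdsWithin] with δ hδ
    simpa [sub_nonneg] using main' δ hδ
  have h7 : (0:A) ≤ y ^ r - x ^ r :=
    CStarAlgebra.isClosed_nonneg.mem_of_tendsto hg hmem
  rwa [sub_nonneg] at h7

end LH

/-- If `A` and `Q` are bounded operators on a complex Hilbert space with `AQ = QA`, then for
every `n ≥ 2`, `(((AQ)*)ⁿ(AQ)ⁿ)^{2/n} ≤ ‖A‖⁴ ((Q*)ⁿQⁿ)^{2/n}`, powers of positive operators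
being taken via continuous functional calculus. -/
theorem stmt_5 {H : Type*} [NormedAddCommGroup H] [InnerProductSpace ℂ H] [CompleteSpace H]
    (A Q : H →L[ℂ] H) (hAQ : A * Q = Q * A) (n : ℕ) (hn : 2 ≤ n) :
    CFC.nnrpow ((ContinuousLinearMap.adjoint (A * Q)) ^ n * (A * Q) ^ n) (2 / (n : ℝ≥0)) ≤
      (‖A‖ ^ 4) • CFC.nnrpow ((ContinuousLinearMap.adjoint Q) ^ n * Q ^ n) (2 / (n : ℝ≥0)) := by
  rcases subsingleton_or_nontrivial (H →L[ℂ] H) with hsub | hnt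
  · exact le_of_eq (Subsingleton.elim _ _)
  have hn' : (0:ℝ) < n := by positivity
  have hnn : n ≠ 0 := by omega
  have hr0 : (0:ℝ) ≤ 2/(n:ℝ) := by positivity
  have hr1 : 2/(n:ℝ) ≤ 1 := by
    rw [div_le_one hn']; exact_mod_cast hn
  have hq : (0:ℝ≥0) < 2/(n:ℝ≥0) := by
    have hn2 : (0:ℝ≥0) < (n:ℝ≥0) := by exact_mod_cast Nat.pos_of_ne_zero hnn
    positivity
  have hadj : ∀ M : H →L[ℂ] H, ContinuousLinearMap.adjoint M = star M := fun M =>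
    (ContinuousLinearMap.star_eq_adjoint M).symm
  simp only [hadj, ← star_pow]
  rw [CFC.nnrpow_eq_pow, CFC.nnrpow_eq_pow, CFC.nnrpow_eq_rpow hq, CFC.nnrpow_eq_rpow hq]
  have hcoe : ((2/(n:ℝ≥0) : ℝ≥0) : ℝ) = 2/(n:ℝ) := by
    simp [NNReal.coe_div]
  rw [hcoe]
  set c : ℝ≥0 := (‖A‖₊ ^ n) ^ 2 with hc
  have hX : (A*Q)^n = A^n * Q^n := Commute.mul_pow hAQ n
  have hT : 0 ≤ star ((A*Q)^n) * (A*Q)^n := star_mul_self_nonneg _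
  have hS : 0 ≤ star (Q^n) * Q^n := star_mul_self_nonneg _
  have h1 : star (A^n) * A^n ≤ c • (1 : H →L[ℂ] H) := by
    refine (CStarAlgebra.star_mul_le_algebraMap_norm_sq (a := A^n)).trans ?_
    rw [Algebra.algebraMap_eq_smul_one]
    have he : (‖A^n‖^2 : ℝ) • (1 : H →L[ℂ] H) = ((‖A^n‖₊^2 : ℝ≥0)) • 1 := by
      rw [NNReal.smul_def]; push_cast; rfl
    rw [he, hc]
    exact my_smul_le_smul (pow_le_pow_left' (nnnorm_pow_le' A (by omega)) 2) zero_le_one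
  have hTS : star ((A*Q)^n) * (A*Q)^n ≤ c • (star (Q^n) * Q^n) := by
    calc star ((A*Q)^n) * (A*Q)^n = star (Q^n) * (star (A^n) * A^n) * Q^n := by
          rw [hX, star_mul]; simp only [mul_assoc]
      _ ≤ star (Q^n) * (c • (1 : H →L[ℂ] H)) * Q^n := star_left_conjugate_le_conjugate h1 (Q^n)
      _ = c • (star (Q^n) * Q^n) := by rw [mul_smul_comm, smul_mul_assoc, mul_one]
  have hc_pow : c ^ ((2:ℝ)/n) = ‖A‖₊ ^ 4 := by
    rw [hc, ← pow_mul, ← NNReal.rpow_natCast ‖A‖₊ (n*2), ← NNReal.rpow_mul,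
      show ((n*2 : ℕ):ℝ) * (2/(n:ℝ)) = 4 by push_cast; field_simp; ring,
      show (4:ℝ) = ((4:ℕ):ℝ) by norm_num, NNReal.rpow_natCast]
  have hrhs : (‖A‖ ^ 4 : ℝ) • (star (Q^n) * Q^n) ^ ((2:ℝ)/n)
      = (‖A‖₊ ^ 4 : ℝ≥0) • (star (Q^n) * Q^n) ^ ((2:ℝ)/n) := by
    rw [NNReal.smul_def]; push_cast; rfl
  rw [hrhs]
  calc (star ((A*Q)^n) * (A*Q)^n) ^ ((2:ℝ)/n)
      ≤ (c • (star (Q^n) * Q^n)) ^ ((2:ℝ)/n) :=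
        lh_general hT (my_smul_nonneg c hS) hTS hr0 hr1
    _ = c ^ ((2:ℝ)/n) • (star (Q^n) * Q^n) ^ ((2:ℝ)/n) :=
        my_smul_rpow c _ hS _ hr0
    _ = (‖A‖₊ ^ 4 : ℝ≥0) • (star (Q^n) * Q^n) ^ ((2:ℝ)/n) := by rw [hc_pow]
end

section
/- Let R be a unital ring in which every one-sided invertible element is invertible (i.e., for all a, b ∈ R, ab = 1 implies ba = 1). Let T ∈ R and let p ∈ R be an idempotent (p² = p) that is T-invariant, meaning Tp = pTp. Then T is invertible in R if and only if pTp has a two-sided inverse in the corner ring pRp with unit p (i.e., there exists x with x = pxp, x(pTp) = p = (pTp)x) and (1−p)T(1−p) has a two-sided inverse in the corner ring (1−p)R(1−p) with unit 1−p. Consequently, for a unital ℂ-algebra R with this property, the spectrum of T equals the union of the spectrum of pTp in pRp and the spectrum of (1−p)T(1−p) in (1−p)R(1−p). -/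
/-- The spectrum of an element `x` of the corner ring `eAe` (with unit `e`) of a unital
`ℂ`-algebra `A`: the set of `λ ∈ ℂ` such that `x - λe` has no two-sided inverse in `eAe`. -/
def cornerSpectrum {A : Type*} [Ring A] [Algebra ℂ A] (e x : A) : Set ℂ :=
  {lam | ¬ ∃ y : A, y = e * y * e ∧ y * (x - lam • e) = e ∧ (x - lam • e) * y = e}

lemma corner_rep {A : Type*} [Ring A] (e z : A) (he : e * e = e) :
    e * z * e = e * (e * z * e) * e := by
  linear_combination (norm := noncomm_ring) -(e * e * z * he) - he * z * e

lemma corner_flip {A : Type*} [Ring A] (hA : ∀ a b : A, a * b = 1 → b * a = 1)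
    (e x a : A) (he : e * e = e) (hx : x = e * x * e) (ha : a = e * a * e)
    (h : x * a = e) : a * x = e := by
  have hxe : x * e = x := by
    linear_combination (norm := noncomm_ring) hx * e + e * x * he - hx
  have hex : e * x = x := by
    linear_combination (norm := noncomm_ring) e * hx + he * x * e - hx
  have hae : a * e = a := by
    linear_combination (norm := noncomm_ring) ha * e + e * a * he - ha
  have hea : e * a = a := by
    linear_combination (norm := noncomm_ring) e * ha + he * a * e - ha
  have h1 : (x + (1 - e)) * (a + (1 - e)) = 1 := by
    linear_combination (norm := noncomm_ring) h - hxe - hea + he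
  have h2 := hA _ _ h1
  linear_combination (norm := noncomm_ring) h2 + hae + hex - he

lemma key {A : Type*} [Ring A] (hA : ∀ a b : A, a * b = 1 → b * a = 1)
    (T p : A) (hp : p * p = p) (hTp : T * p = p * T * p) :
    IsUnit T ↔
      ((∃ x : A, x = p * x * p ∧ x * (p * T * p) = p ∧ (p * T * p) * x = p) ∧
       (∃ y : A, y = (1 - p) * y * (1 - p) ∧
          y * ((1 - p) * T * (1 - p)) = 1 - p ∧ ((1 - p) * T * (1 - p)) * y = 1 - p)) := by
  have hq : (1 - p) * (1 - p) = (1 - p) := by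
    linear_combination (norm := noncomm_ring) hp
  constructor
  · rintro ⟨u, rfl⟩
    set S : A := ↑u⁻¹ with hS
    have hTS : (u : A) * S = 1 := u.mul_inv
    have hST : S * (u : A) = 1 := u.inv_mul
    refine ⟨⟨p * S * p, corner_rep p S hp, ?_, ?_⟩,
            ⟨(1 - p) * S * (1 - p), corner_rep (1 - p) S hq, ?_, ?_⟩⟩
    · linear_combination (norm := noncomm_ring)
        p * S * hp * (u : A) * p + p * S * hTp.symm + p * hST * p + hp
    · have hxa : (p * S * p) * (p * (u : A) * p) = p := by
        linear_combination (norm := noncomm_ring)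
          p * S * hp * (u : A) * p + p * S * hTp.symm + p * hST * p + hp
      exact corner_flip hA p (p * S * p) (p * (u : A) * p) hp
        (corner_rep p S hp) (corner_rep p (u : A) hp) hxa
    · have hdy : ((1 - p) * (u : A) * (1 - p)) * ((1 - p) * S * (1 - p)) = (1 - p) := by
        have hqTp : (1 - p) * (u : A) * p = 0 := by
          linear_combination (norm := noncomm_ring) hTp
        linear_combination (norm := noncomm_ring)
          (1 - p) * (u : A) * hq * S * (1 - p) - hqTp * S * (1 - p) +
            (1 - p) * hTS * (1 - p) + hq
      exact corner_flip hA (1 - p) ((1 - p) * (u : A) * (1 - p)) ((1 - p) * S * (1 - p)) hq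
        (corner_rep (1 - p) (u : A) hq) (corner_rep (1 - p) S hq) hdy
    · have hqTp : (1 - p) * (u : A) * p = 0 := by
        linear_combination (norm := noncomm_ring) hTp
      linear_combination (norm := noncomm_ring)
        (1 - p) * (u : A) * hq * S * (1 - p) - hqTp * S * (1 - p) +
          (1 - p) * hTS * (1 - p) + hq
  · rintro ⟨⟨x, hx, hxa, hax⟩, ⟨y, hy, hyd, hdy⟩⟩
    have hpx : p * x = x := by
      linear_combination (norm := noncomm_ring) p * hx + hp * x * p - hx
    have hxp : x * p = x := by
      linear_combination (norm := noncomm_ring) hx * p + p * x * hp - hx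
    have hqy : (1 - p) * y = y := by
      linear_combination (norm := noncomm_ring) (1 - p) * hy + hq * y * (1 - p) - hy
    have hyq : y * (1 - p) = y := by
      linear_combination (norm := noncomm_ring) hy * (1 - p) + (1 - p) * y * hq - hy
    have hqp : (1 - p) * p = 0 := by
      linear_combination (norm := noncomm_ring) -hp
    have hyp0 : y * p = 0 := by
      linear_combination (norm := noncomm_ring) y * hqp - hyq * p
    have hTx : T * x = p := by
      linear_combination (norm := noncomm_ring) hax + hTp * x - T * hpx
    have h5 : (1 - p) * T * y = 1 - p := by
      linear_combination (norm := noncomm_ring) hdy - (1 - p) * T * hqy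
    have hyTp : y * T * p = 0 := by
      linear_combination (norm := noncomm_ring) y * hTp + hyp0 * T * p
    have hyTq : y * T * (1 - p) = 1 - p := by
      linear_combination (norm := noncomm_ring) hyd - hyq * T * (1 - p)
    have hyT : y * T = 1 - p := by
      linear_combination (norm := noncomm_ring) hyTp + hyTq
    have hxTp : x * T * p = p := by
      linear_combination (norm := noncomm_ring) hxa + x * hTp
    have g1 : T * (x + y - x * T * y) = 1 := by
      linear_combination (norm := noncomm_ring) hTx * (1 - T * y) + h5
    have g2 : (x + y - x * T * y) * T = 1 := by
      linear_combination (norm := noncomm_ring) (1 - x * T) * hyT + hxTp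
    exact ⟨⟨T, x + y - x * T * y, g1, g2⟩, rfl⟩

/-- Let `A` be a unital `ℂ`-algebra in which every one-sided invertible element is invertible,
`T ∈ A`, and `p` an idempotent with `Tp = pTp`. Then `T` is invertible iff `pTp` is invertible
in the corner ring `pAp` and `(1-p)T(1-p)` is invertible in the corner ring `(1-p)A(1-p)`;
consequently the spectrum of `T` is the union of the spectra of `pTp` and `(1-p)T(1-p)` in the
respective corner rings. -/
theorem stmt_10 {A : Type*} [Ring A] [Algebra ℂ A] (hA : ∀ a b : A, a * b = 1 → b * a = 1)
    (T p : A) (hp : p * p = p) (hTp : T * p = p * T * p) :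
    (IsUnit T ↔
      ((∃ x : A, x = p * x * p ∧ x * (p * T * p) = p ∧ (p * T * p) * x = p) ∧
       (∃ y : A, y = (1 - p) * y * (1 - p) ∧
          y * ((1 - p) * T * (1 - p)) = 1 - p ∧ ((1 - p) * T * (1 - p)) * y = 1 - p))) ∧
    spectrum ℂ T =
      cornerSpectrum p (p * T * p) ∪ cornerSpectrum (1 - p) ((1 - p) * T * (1 - p)) := by
  have hq : (1 - p) * (1 - p) = (1 - p) := by
    linear_combination (norm := noncomm_ring) hp
  refine ⟨key hA T p hp hTp, ?_⟩
  ext lam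
  have hc1 : p * (T - lam • (1 : A)) * p = p * T * p - lam • p := by
    rw [mul_sub, sub_mul, mul_smul_comm, mul_one, smul_mul_assoc, hp]
  have hz3 : (1 - p) * (lam • (1 : A)) * (1 - p) = lam • (1 - p) := by
    rw [mul_smul_comm, mul_one, smul_mul_assoc, hq]
  have hc2 : (1 - p) * (T - lam • (1 : A)) * (1 - p)
      = (1 - p) * T * (1 - p) - lam • (1 - p) := by
    rw [mul_sub (1 - p) T (lam • (1 : A)),
      sub_mul ((1 - p) * T) ((1 - p) * (lam • (1 : A))) (1 - p), hz3]
  have hTp' : (T - lam • (1 : A)) * p = p * (T - lam • (1 : A)) * p := by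
    rw [sub_mul, smul_mul_assoc, one_mul, hc1, hTp]
  have hiso : IsUnit (algebraMap ℂ A lam - T) ↔ IsUnit (T - lam • (1 : A)) := by
    rw [show algebraMap ℂ A lam - T = -(T - lam • (1 : A)) by
      rw [Algebra.algebraMap_eq_smul_one]; abel]
    exact IsUnit.neg_iff _
  have hkey := key hA (T - lam • (1 : A)) p hp hTp'
  rw [hc1, hc2] at hkey
  simp only [Set.mem_union, spectrum.mem_iff, cornerSpectrum, Set.mem_setOf_eq]
  rw [hiso, hkey, not_and_or]
end

section
/- Let R be a unital ring in which every one-sided invertible element is invertible (i.e., for all a, b ∈ R, ab = 1 implies ba = 1). Let T ∈ R, let 0 = p₀, p₁, …, pₙ = 1 be idempotents in R with pⱼpₖ = p_{min(j,k)} for all j, k (an increasing chain) such that each pⱼ is T-invariant (Tpⱼ = pⱼTpⱼ), and set eⱼ = pⱼ − p_{j−1} and S = Σ_{j=1}^n eⱼ T eⱼ. If T is invertible, then S is invertible and S⁻¹ = Σ_{j=1}^n eⱼ T⁻¹ eⱼ. -/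
/-- Corner-ring lemma: diagonal compression of `T` times diagonal compression of `U = T⁻¹`
    on the "band" `q - r` equals `q - r`. -/
lemma diag_inv_aux {R : Type*} [Ring R] (T U q r : R) (hq : q*q = q) (hr : r*r = r)
    (hqr : q*r = r) (hrq : r*q = r)
    (hTr : T*r = r*T*r) (hUq : U*q = q*U*q) (hUr : U*r = r*U*r)
    (hTU : T*U = 1) :
    ((q-r)*T*(q-r)) * ((q-r)*U*(q-r)) = q - r := by
  have her : (q - r) * r = 0 := by rw [sub_mul, hqr, hr, sub_self]
  have heq : (q - r) * q = q - r := by rw [sub_mul, hq, hrq]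
  have hee : (q - r) * (q - r) = q - r := by rw [mul_sub, heq, her, sub_zero]
  have hUe : (q-r)*U*(q-r) = (q-r)*U*q := by
    have h0 : (q-r)*U*r = 0 := by
      rw [mul_assoc, hUr, show (q-r)*(r*U*r) = ((q-r)*r)*(U*r) by noncomm_ring, her, zero_mul]
    rw [mul_sub, h0, sub_zero]
  calc ((q-r)*T*(q-r)) * ((q-r)*U*(q-r))
      = ((q-r)*T*(q-r)) * ((q-r)*U*q) := by rw [hUe]
    _ = (q-r)*T*(((q-r)*(q-r))*U*q) := by noncomm_ring
    _ = (q-r)*T*((q-r)*U*q) := by rw [hee]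
    _ = (q-r)*(T*(q*U*q)) - (q-r)*((T*r)*(U*q)) := by noncomm_ring
    _ = (q-r)*(T*(U*q)) - (q-r)*((r*T*r)*(U*q)) := by rw [← hUq, ← hTr]
    _ = (q-r)*((T*U)*q) - ((q-r)*r)*(T*r*(U*q)) := by noncomm_ring
    _ = (q-r)*(1*q) - 0*(T*r*(U*q)) := by rw [hTU, her]
    _ = q - r := by rw [one_mul, zero_mul, sub_zero, heq]


/-- Let `R` be a unital ring in which every one-sided invertible element is invertible. Let
`T ∈ R`, let `0 = p₀, p₁, …, pₙ = 1` be an increasing chain of `T`-invariant idempotents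
(`pⱼpₖ = p_{min(j,k)}`), and set `eⱼ = pⱼ - p_{j-1}` and `S = Σⱼ eⱼ T eⱼ`. If `T` is
invertible, then `S` is invertible and `S⁻¹ = Σⱼ eⱼ T⁻¹ eⱼ`. -/
theorem stmt_12 {R : Type*} [Ring R] (hR : ∀ a b : R, a * b = 1 → b * a = 1)
    (T : R) (n : ℕ) (p : ℕ → R) (hp0 : p 0 = 0) (hpn : p n = 1)
    (hchain : ∀ j k, j ≤ n → k ≤ n → p j * p k = p (min j k))
    (hTp : ∀ j ≤ n, T * p j = p j * T * p j)
    (S : R) (hS : S = ∑ j ∈ Finset.Icc 1 n, (p j - p (j - 1)) * T * (p j - p (j - 1)))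
    (hT : IsUnit T) :
    IsUnit S ∧
    Ring.inverse S =
      ∑ j ∈ Finset.Icc 1 n, (p j - p (j - 1)) * Ring.inverse T * (p j - p (j - 1)) := by
  classical
  set U := Ring.inverse T with hUdef
  have hTU : T * U = 1 := Ring.mul_inverse_cancel T hT
  have hUT : U * T = 1 := Ring.inverse_mul_cancel T hT
  have hid : ∀ j ≤ n, p j * p j = p j := fun j hj => by simpa using hchain j j hj hj
  -- U is invariant under each p j (uses Dedekind finiteness)
  have hUp : ∀ j ≤ n, U * p j = p j * U * p j := by
    intro j hj
    have hq := hid j hj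
    have hT' := hTp j hj
    have key : p j * U * p j * (p j * T * p j) = p j := by
      calc p j * U * p j * (p j * T * p j)
          = p j * U * ((p j * p j) * T * p j) := by noncomm_ring
        _ = p j * U * (p j * T * p j) := by rw [hq]
        _ = p j * (U * T) * p j := by rw [← hT']; noncomm_ring
        _ = p j := by rw [hUT, mul_one, hq]
    have hba : (p j * U * p j + (1 - p j)) * (p j * T * p j + (1 - p j)) = 1 := by
      have expand : (p j * U * p j + (1 - p j)) * (p j * T * p j + (1 - p j))
          = p j * U * p j * (p j * T * p j)
            + (p j * U * p j - p j * U * (p j * p j))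
            + (p j * T * p j - (p j * p j) * T * p j)
            + (1 - p j - p j + p j * p j) := by noncomm_ring
      rw [expand, key, hq]
      noncomm_ring
    have hab := hR _ _ hba
    have expand2 : (p j * T * p j + (1 - p j)) * (p j * U * p j + (1 - p j))
        = p j * T * p j * (p j * U * p j)
          + (p j * T * p j - p j * T * (p j * p j))
          + (p j * U * p j - (p j * p j) * U * p j)
          + (1 - p j - p j + p j * p j) := by noncomm_ring
    rw [expand2, hq] at hab
    have key2 : p j * T * p j * (p j * U * p j) = p j := by
      have h1 : p j * T * p j * (p j * U * p j) + (1 - p j) = 1 := by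
        calc p j * T * p j * (p j * U * p j) + (1 - p j)
            = p j * T * p j * (p j * U * p j) + (p j * T * p j - p j * T * p j)
              + (p j * U * p j - p j * U * p j) + (1 - p j - p j + p j) := by noncomm_ring
          _ = 1 := hab
      calc p j * T * p j * (p j * U * p j)
          = (p j * T * p j * (p j * U * p j) + (1 - p j)) - (1 - p j) := by noncomm_ring
        _ = 1 - (1 - p j) := by rw [h1]
        _ = p j := by noncomm_ring
    have key3 : T * p j * (p j * U * p j) = p j := by rw [hT']; exact key2
    have h5 : U * (T * p j * (p j * U * p j)) = U * p j := by rw [key3]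
    have h6 : U * (T * p j * (p j * U * p j)) = (U * T) * (p j * p j * U * p j) := by
      noncomm_ring
    rw [h6, hUT, one_mul, hq] at h5
    exact h5.symm
  -- orthogonality of the e's
  have horth : ∀ j ∈ Finset.Icc 1 n, ∀ k ∈ Finset.Icc 1 n, j ≠ k →
      (p j - p (j-1)) * (p k - p (k-1)) = 0 := by
    intro j hj k hk hjk
    simp only [Finset.mem_Icc] at hj hk
    have hjn : j ≤ n := hj.2
    have hkn : k ≤ n := hk.2
    have hj1 : j - 1 ≤ n := by omega
    have hk1 : k - 1 ≤ n := by omega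
    have e1 := hchain j k hjn hkn
    have e2 := hchain j (k-1) hjn hk1
    have e3 := hchain (j-1) k hj1 hkn
    have e4 := hchain (j-1) (k-1) hj1 hk1
    rcases lt_or_gt_of_ne hjk with h | h
    · have m1 : min j k = j := by omega
      have m2 : min j (k-1) = j := by omega
      have m3 : min (j-1) k = j - 1 := by omega
      have m4 : min (j-1) (k-1) = j - 1 := by omega
      rw [m1] at e1; rw [m2] at e2; rw [m3] at e3; rw [m4] at e4
      rw [sub_mul, mul_sub, mul_sub, e1, e2, e3, e4]
      noncomm_ring
    · have m1 : min j k = k := by omega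
      have m2 : min j (k-1) = k - 1 := by omega
      have m3 : min (j-1) k = k := by omega
      have m4 : min (j-1) (k-1) = k - 1 := by omega
      rw [m1] at e1; rw [m2] at e2; rw [m3] at e3; rw [m4] at e4
      rw [sub_mul, mul_sub, mul_sub, e1, e2, e3, e4]
      noncomm_ring
  -- telescoping
  have htel : ∑ j ∈ Finset.Icc 1 n, (p j - p (j-1)) = 1 := by
    rw [← Finset.Ico_add_one_right_eq_Icc, Finset.sum_Ico_eq_sum_range, Nat.add_sub_cancel]
    have hcong : ∀ i ∈ Finset.range n, p (1 + i) - p (1 + i - 1) = p (i + 1) - p i := by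
      intro i _
      congr 1 <;> · congr 1; omega
    rw [Finset.sum_congr rfl hcong, Finset.sum_range_sub p n, hpn, hp0, sub_zero]
  -- diagonal products
  have hdiagTU : ∀ j ∈ Finset.Icc 1 n,
      ((p j - p (j-1)) * T * (p j - p (j-1))) * ((p j - p (j-1)) * U * (p j - p (j-1)))
        = p j - p (j-1) := by
    intro j hj
    simp only [Finset.mem_Icc] at hj
    have hjn : j ≤ n := hj.2
    have hj1 : j - 1 ≤ n := by omega
    have hqr : p j * p (j-1) = p (j-1) := by
      have := hchain j (j-1) hjn hj1; rwa [min_eq_right (by omega)] at this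
    have hrq : p (j-1) * p j = p (j-1) := by
      have := hchain (j-1) j hj1 hjn; rwa [min_eq_left (by omega)] at this
    exact diag_inv_aux T U (p j) (p (j-1)) (hid j hjn) (hid (j-1) hj1) hqr hrq
      (hTp (j-1) hj1) (hUp j hjn) (hUp (j-1) hj1) hTU
  have hdiagUT : ∀ j ∈ Finset.Icc 1 n,
      ((p j - p (j-1)) * U * (p j - p (j-1))) * ((p j - p (j-1)) * T * (p j - p (j-1)))
        = p j - p (j-1) := by
    intro j hj
    simp only [Finset.mem_Icc] at hj
    have hjn : j ≤ n := hj.2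
    have hj1 : j - 1 ≤ n := by omega
    have hqr : p j * p (j-1) = p (j-1) := by
      have := hchain j (j-1) hjn hj1; rwa [min_eq_right (by omega)] at this
    have hrq : p (j-1) * p j = p (j-1) := by
      have := hchain (j-1) j hj1 hjn; rwa [min_eq_left (by omega)] at this
    exact diag_inv_aux U T (p j) (p (j-1)) (hid j hjn) (hid (j-1) hj1) hqr hrq
      (hUp (j-1) hj1) (hTp j hjn) (hTp (j-1) hj1) hUT
  set S' : R := ∑ j ∈ Finset.Icc 1 n, (p j - p (j-1)) * U * (p j - p (j-1)) with hS'
  -- generic: product of two such block-diagonal sums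
  have hprod : ∀ A B : R,
      (∀ j ∈ Finset.Icc 1 n,
        ((p j - p (j-1)) * A * (p j - p (j-1))) * ((p j - p (j-1)) * B * (p j - p (j-1)))
          = p j - p (j-1)) →
      (∑ j ∈ Finset.Icc 1 n, (p j - p (j-1)) * A * (p j - p (j-1)))
        * (∑ j ∈ Finset.Icc 1 n, (p j - p (j-1)) * B * (p j - p (j-1))) = 1 := by
    intro A B hdiag
    rw [Finset.sum_mul_sum]
    have : ∀ j ∈ Finset.Icc 1 n,
        (∑ k ∈ Finset.Icc 1 n,
          ((p j - p (j-1)) * A * (p j - p (j-1))) * ((p k - p (k-1)) * B * (p k - p (k-1))))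
          = p j - p (j-1) := by
      intro j hj
      rw [Finset.sum_eq_single j]
      · exact hdiag j hj
      · intro k hk hkj
        have h0 := horth j hj k hk (Ne.symm hkj)
        calc ((p j - p (j-1)) * A * (p j - p (j-1))) * ((p k - p (k-1)) * B * (p k - p (k-1)))
            = (p j - p (j-1)) * A * (((p j - p (j-1)) * (p k - p (k-1))) * B
                * (p k - p (k-1))) := by noncomm_ring
          _ = 0 := by rw [h0, zero_mul, zero_mul, mul_zero]
      · intro hj'; exact absurd hj hj'
    rw [Finset.sum_congr rfl this, htel]
  have hSS' : S * S' = 1 := by rw [hS, hS']; exact hprod T U hdiagTU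
  have hS'S : S' * S = 1 := by rw [hS, hS']; exact hprod U T hdiagUT
  have hu : IsUnit S := ⟨⟨S, S', hSS', hS'S⟩, rfl⟩
  refine ⟨hu, ?_⟩
  rw [show S = ((⟨S, S', hSS', hS'S⟩ : Rˣ) : R) from rfl, Ring.inverse_unit]
  rfl
end

section
/- Let A be a unital algebra over ℂ in which every one-sided invertible element is invertible (i.e., for all a, b, ab = 1 implies ba = 1). Let T ∈ A, let 0 = p₀, p₁, …, pₙ = 1 be idempotents in A with pⱼpₖ = p_{min(j,k)} for all j, k such that each pⱼ is T-invariant (Tpⱼ = pⱼTpⱼ), and set eⱼ = pⱼ − p_{j−1} and S = Σ_{j=1}^n eⱼ T eⱼ. Then the spectrum of S equals the spectrum of T. -/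
open Finset in
private lemma key_tri {A : Type*} [Ring A] (hA : ∀ a b : A, a * b = 1 → b * a = 1)
    (n : ℕ) (p : ℕ → A) (hp0 : p 0 = 0) (hpn : p n = 1)
    (hchain : ∀ j k, j ≤ n → k ≤ n → p j * p k = p (min j k))
    (x : A) (hx : ∀ j ≤ n, x * p j = p j * x * p j) :
    IsUnit x ↔ IsUnit (∑ i ∈ Finset.range n, (p (i+1) - p i) * x * (p (i+1) - p i)) := by
  set e : ℕ → A := fun i => p (i+1) - p i with he
  have hpp : ∀ j ≤ n, p j * p j = p j := fun j hj => by simpa using hchain j j hj hj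
  have hep : ∀ i j, i < n → j ≤ n → e i * p j = if i < j then e i else 0 := by
    intro i j hi hj
    simp only [he, sub_mul, hchain (i+1) j hi hj, hchain i j (le_of_lt hi) hj]
    split
    · next h => rw [min_eq_left h, min_eq_left (le_of_lt h)]
    · next h => rw [min_eq_right (by omega), min_eq_right (by omega), sub_self]
  have hpe : ∀ j i, j ≤ n → i < n → p j * e i = if i < j then e i else 0 := by
    intro j i hj hi
    simp only [he, mul_sub, hchain j (i+1) hj hi, hchain j i hj (le_of_lt hi)]
    split
    · next h => rw [min_eq_right h, min_eq_right (le_of_lt h)]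
    · next h => rw [min_eq_left (by omega), min_eq_left (by omega), sub_self]
  have hee : ∀ i k, i < n → k < n → e i * e k = if i = k then e i else 0 := by
    intro i k hi hk
    have h1 : e i * e k = e i * p (k+1) - e i * p k := by rw [mul_sub]
    rw [h1, hep i (k+1) hi hk, hep i k hi (le_of_lt hk)]
    by_cases h : i = k
    · subst h; rw [if_pos (by omega), if_neg (by omega), if_pos rfl, sub_zero]
    · rcases Nat.lt_or_ge i k with hlt | hge
      · rw [if_pos (by omega), if_pos hlt, if_neg h, sub_self]
      · rw [if_neg (by omega), if_neg (by omega), if_neg h, sub_zero]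
  have hsum : ∑ i ∈ range n, e i = 1 := by
    rw [he]; rw [Finset.sum_range_sub (fun i => p i), hpn, hp0, sub_zero]
  set D := ∑ i ∈ range n, e i * x * e i with hD
  -- e i * y * e i in convenient form, for any "upper triangular" y
  have hexe : ∀ y : A, (∀ j ≤ n, y * p j = p j * y * p j) → ∀ i, i < n →
      e i * y * e i = y * p (i+1) - p i * y * p (i+1) := by
    intro y hy i hi
    have hin : i ≤ n := le_of_lt hi
    have hsr : p (i+1) * p i = p i := by
      rw [hchain (i+1) i hi hin, min_eq_right (by omega)]
    have h3 : p (i+1) * y * p (i+1) = y * p (i+1) := (hy (i+1) hi).symm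
    have h5 : p i * y * p i = y * p i := (hy i hin).symm
    have h4 : p (i+1) * y * p i = y * p i := by
      rw [mul_assoc, hy i hin, ← mul_assoc, ← mul_assoc, hsr, h5]
    rw [show e i * y * e i
        = p (i+1)*y*p (i+1) - p i*y*p (i+1) - (p (i+1)*y*p i - p i*y*p i) from by
      simp only [he]; noncomm_ring, h3, h4, h5]
    abel
  -- diagonal products
  have hdiag : ∀ w z : A, (∀ j ≤ n, w * p j = p j * w * p j) →
      (∀ j ≤ n, z * p j = p j * z * p j) → z * w = 1 → ∀ i, i < n →
      (e i * z * e i) * (e i * w * e i) = e i := by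
    intro w z hw hz hzw i hi
    have hin : i ≤ n := le_of_lt hi
    have heidem : e i * e i = e i := by rw [hee i i hi hi, if_pos rfl]
    have her : e i * p i = 0 := by rw [hep i i hi hin, if_neg (lt_irrefl i)]
    have hes : e i * p (i+1) = e i := by rw [hep i (i+1) hi hi, if_pos (Nat.lt_succ_self i)]
    have step1 : (e i * z * e i) * (e i * w * e i) = e i * z * (e i * w * e i) := by
      rw [mul_assoc (e i * z) (e i), ← mul_assoc (e i) (e i * w), ← mul_assoc (e i) (e i),
        heidem]
    rw [step1, hexe w hw i hi, mul_sub]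
    have t1 : e i * z * (w * p (i+1)) = e i := by
      rw [← mul_assoc, mul_assoc (e i) z w, hzw, mul_one, hes]
    have t2 : e i * z * (p i * w * p (i+1)) = 0 := by
      rw [← mul_assoc, ← mul_assoc (e i * z), mul_assoc (e i) z (p i), hz i hin,
        ← mul_assoc, ← mul_assoc, her, zero_mul, zero_mul, zero_mul, zero_mul]
    rw [t1, t2, sub_zero]
  -- product of diagonals
  have hinv : ∀ w z : A, (∀ j ≤ n, w * p j = p j * w * p j) →
      (∀ j ≤ n, z * p j = p j * z * p j) → z * w = 1 →
      (∑ i ∈ range n, e i * z * e i) * (∑ i ∈ range n, e i * w * e i) = 1 := by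
    intro w z hw hz hzw
    rw [Finset.sum_mul_sum]
    have hcollapse : ∀ i ∈ range n,
        (∑ k ∈ range n, e i * z * e i * (e k * w * e k)) = e i := by
      intro i hi
      rw [Finset.sum_eq_single i]
      · exact hdiag w z hw hz hzw i (mem_range.mp hi)
      · intro k hk hki
        rw [mul_assoc (e i * z) (e i), ← mul_assoc (e i) (e k * w), ← mul_assoc (e i) (e k),
          hee i k (mem_range.mp hi) (mem_range.mp hk), if_neg (Ne.symm hki),
          zero_mul, zero_mul, mul_zero]
      · intro hni; exact absurd hi hni
    rw [Finset.sum_congr rfl hcollapse, hsum]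
  -- D commutes with every p j
  have hDp : ∀ j ≤ n, D * p j = p j * D := by
    intro j hj
    rw [hD, Finset.sum_mul, Finset.mul_sum]
    refine Finset.sum_congr rfl fun i hi => ?_
    have hi' := Finset.mem_range.mp hi
    rw [mul_assoc, hep i j hi' hj, ← mul_assoc, ← mul_assoc, hpe j i hj hi']
    split <;> simp
  constructor
  · -- x invertible → D invertible
    rintro ⟨u, hu⟩
    set y : A := ((u⁻¹ : Aˣ) : A) with hy
    have hxy : x * y = 1 := by rw [← hu, hy]; exact u.mul_inv
    have hyx : y * x = 1 := by rw [← hu, hy]; exact u.inv_mul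
    -- y is triangular
    have hyp2 : ∀ j ≤ n, (p j * y * p j) * (p j * x * p j) = p j := by
      intro j hj
      rw [mul_assoc (p j * y) (p j) (p j * x * p j)]
      rw [show p j * (p j * x * p j) = x * p j from by
        rw [← mul_assoc, ← mul_assoc, hpp j hj, ← hx j hj]]
      rw [mul_assoc, ← mul_assoc y x, hyx, one_mul, hpp j hj]
    have hyp3 : ∀ j ≤ n, (p j * x * p j) * (p j * y * p j) = p j := by
      intro j hj
      have hP := hpp j hj
      have e1 : (p j * y * p j) * (1 - p j) = 0 := by
        rw [mul_sub, mul_one, mul_assoc (p j * y), hP, sub_self]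
      have e2 : (1 - p j) * (p j * x * p j) = 0 := by
        rw [sub_mul, one_mul, ← mul_assoc, ← mul_assoc, hP, sub_self]
      have e3 : (1 - p j) * (1 - p j) = 1 - p j := by
        simp only [mul_sub, sub_mul, mul_one, one_mul, hP]; abel
      have e1' : (p j * x * p j) * (1 - p j) = 0 := by
        rw [mul_sub, mul_one, mul_assoc (p j * x), hP, sub_self]
      have e2' : (1 - p j) * (p j * y * p j) = 0 := by
        rw [sub_mul, one_mul, ← mul_assoc, ← mul_assoc, hP, sub_self]
      have hl : (p j * y * p j + (1 - p j)) * (p j * x * p j + (1 - p j)) = 1 := by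
        rw [mul_add, add_mul, add_mul, hyp2 j hj, e1, e2, e3]
        abel
      have hr := hA _ _ hl
      rw [mul_add, add_mul, add_mul, e1', e2', e3] at hr
      simp only [add_zero, zero_add] at hr
      rw [eq_sub_of_add_eq hr, sub_sub_cancel]
    have hyp : ∀ j ≤ n, y * p j = p j * y * p j := by
      intro j hj
      calc y * p j = y * ((p j * x * p j) * (p j * y * p j)) := by rw [hyp3 j hj]
        _ = (y * (p j * x * p j)) * (p j * y * p j) := (mul_assoc _ _ _).symm
        _ = (y * (x * p j)) * (p j * y * p j) := by
            rw [show p j * x * p j = x * p j from (hx j hj).symm]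
        _ = p j * (p j * y * p j) := by rw [← mul_assoc y x, hyx, one_mul]
        _ = p j * y * p j := by rw [← mul_assoc, ← mul_assoc, hpp j hj]
    have h1 : (∑ i ∈ range n, e i * y * e i) * D = 1 := hinv x y hx hyp hyx
    have h2 : D * (∑ i ∈ range n, e i * y * e i) = 1 := hinv y x hyp hx hxy
    exact ⟨⟨D, ∑ i ∈ range n, e i * y * e i, h2, h1⟩, rfl⟩
  · -- D invertible → x invertible
    rintro ⟨u, hu⟩
    set c : A := ((u⁻¹ : Aˣ) : A) with hc
    have hDc : D * c = 1 := by rw [← hu, hc]; exact u.mul_inv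
    have hcD : c * D = 1 := by rw [← hu, hc]; exact u.inv_mul
    have hcp : ∀ j ≤ n, c * p j = p j * c := by
      intro j hj
      calc c * p j = c * p j * (D * c) := by rw [hDc, mul_one]
        _ = c * (p j * D) * c := by rw [← mul_assoc, mul_assoc c (p j) D]
        _ = c * (D * p j) * c := by rw [← hDp j hj]
        _ = p j * c := by rw [← mul_assoc c D, hcD, one_mul]
    have hustep : ∀ i, i < n → (x - D) * p (i+1) = p i * ((x - D) * p (i+1)) := by
      intro i hi
      have hin : i ≤ n := le_of_lt hi
      have hDe : D * e i = e i * x * e i := by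
        conv_lhs => rw [hD]
        rw [Finset.sum_mul]
        rw [Finset.sum_eq_single i]
        · rw [mul_assoc, hee i i hi hi, if_pos rfl]
        · intro k hk hki
          rw [mul_assoc, hee k i (mem_range.mp hk) hi, if_neg hki, mul_zero]
        · intro hni; exact absurd (mem_range.mpr hi) hni
      have h1 : x * p (i+1) - p i * x * p (i+1) = e i * x * e i := (hexe x hx i hi).symm
      have h2 : D * p (i+1) - p i * D * p (i+1) = e i * x * e i := by
        rw [show p i * D = D * p i from (hDp i hin).symm]
        rw [mul_assoc D (p i) (p (i+1)), hchain i (i+1) hin hi, min_eq_left (by omega)]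
        rw [← mul_sub]
        exact hDe
      have hz : (x - D) * p (i+1) - p i * ((x - D) * p (i+1)) = 0 := by
        have expand : (x - D) * p (i+1) - p i * ((x - D) * p (i+1))
            = (x * p (i+1) - p i * x * p (i+1)) - (D * p (i+1) - p i * D * p (i+1)) := by
          noncomm_ring
        rw [expand, h1, h2, sub_self]
      exact sub_eq_zero.mp hz
    set v : A := c * (x - D) with hv
    have hvstep : ∀ i, i < n → v * p (i+1) = p i * (v * p (i+1)) := by
      intro i hi
      calc v * p (i+1) = c * ((x - D) * p (i+1)) := mul_assoc c _ _
        _ = c * (p i * ((x - D) * p (i+1))) := by conv_lhs => rw [hustep i hi]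
        _ = (c * p i) * ((x - D) * p (i+1)) := (mul_assoc _ _ _).symm
        _ = (p i * c) * ((x - D) * p (i+1)) := by rw [hcp i (le_of_lt hi)]
        _ = p i * (v * p (i+1)) := by rw [mul_assoc, ← mul_assoc c]
    have hnil : ∀ j, j ≤ n → v ^ j * p j = 0 := by
      intro j
      induction j with
      | zero => intro _; rw [pow_zero, one_mul, hp0]
      | succ j ih =>
        intro hj
        rw [pow_succ, mul_assoc, hvstep j (by omega), ← mul_assoc, ← mul_assoc,
          ih (by omega), zero_mul, zero_mul]
    have hvnil : IsNilpotent v := ⟨n, by rw [← mul_one (v ^ n), ← hpn, hnil n le_rfl]⟩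
    have hunit1 : IsUnit (1 + v) := by
      simpa [sub_neg_eq_add] using hvnil.neg.isUnit_one_sub
    have hxD : x = D * (1 + v) := by
      rw [mul_add, mul_one, show D * v = x - D from by rw [hv, ← mul_assoc, hDc, one_mul]]
      abel
    rw [hxD]
    exact IsUnit.mul (⟨u, hu⟩ : IsUnit D) hunit1

/-- Let `A` be a unital `ℂ`-algebra in which every one-sided invertible element is invertible.
Let `T ∈ A`, let `0 = p₀, p₁, …, pₙ = 1` be an increasing chain of `T`-invariant idempotents
(`pⱼpₖ = p_{min(j,k)}`), and set `eⱼ = pⱼ - p_{j-1}` and `S = Σⱼ eⱼ T eⱼ`. Then the spectrum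
of `S` equals the spectrum of `T`. -/
theorem stmt_13 {A : Type*} [Ring A] [Algebra ℂ A] (hA : ∀ a b : A, a * b = 1 → b * a = 1)
    (T : A) (n : ℕ) (p : ℕ → A) (hp0 : p 0 = 0) (hpn : p n = 1)
    (hchain : ∀ j k, j ≤ n → k ≤ n → p j * p k = p (min j k))
    (hTp : ∀ j ≤ n, T * p j = p j * T * p j)
    (S : A) (hS : S = ∑ j ∈ Finset.Icc 1 n, (p j - p (j - 1)) * T * (p j - p (j - 1))) :
    spectrum ℂ S = spectrum ℂ T := by
  have hpp : ∀ j ≤ n, p j * p j = p j := fun j hj => by simpa using hchain j j hj hj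
  have heidem : ∀ i, i < n → (p (i+1) - p i) * (p (i+1) - p i) = p (i+1) - p i := by
    intro i hi
    have h1 := hchain (i+1) (i+1) hi hi
    have h2 := hchain (i+1) i hi (le_of_lt hi)
    have h3 := hchain i (i+1) (le_of_lt hi) hi
    have h4 := hchain i i (le_of_lt hi) (le_of_lt hi)
    rw [min_self] at h1 h4
    rw [min_eq_right (by omega)] at h2
    rw [min_eq_left (by omega)] at h3
    rw [mul_sub, sub_mul, sub_mul, h1, h2, h3, h4]
    abel
  have hS' : S = ∑ i ∈ Finset.range n, (p (i+1) - p i) * T * (p (i+1) - p i) := by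
    rw [hS, ← Finset.Ico_add_one_right_eq_Icc, Finset.sum_Ico_eq_sum_range]
    simp [add_comm]
  have main : ∀ z : ℂ, IsUnit (algebraMap ℂ A z - T) ↔ IsUnit (algebraMap ℂ A z - S) := by
    intro z
    have hxt : ∀ j ≤ n, (algebraMap ℂ A z - T) * p j
        = p j * (algebraMap ℂ A z - T) * p j := by
      intro j hj
      have hzz : p j * algebraMap ℂ A z * p j = algebraMap ℂ A z * p j := by
        rw [← Algebra.commutes z (p j), mul_assoc, hpp j hj]
      rw [sub_mul, mul_sub, sub_mul, hTp j hj, hzz]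
    have hdiagS : (∑ i ∈ Finset.range n,
        (p (i+1) - p i) * (algebraMap ℂ A z - T) * (p (i+1) - p i))
        = algebraMap ℂ A z - S := by
      have hterm : ∀ i ∈ Finset.range n,
          (p (i+1) - p i) * (algebraMap ℂ A z - T) * (p (i+1) - p i)
          = algebraMap ℂ A z * (p (i+1) - p i) - (p (i+1) - p i) * T * (p (i+1) - p i) := by
        intro i hi
        have hi' := Finset.mem_range.mp hi
        have h2 : (p (i+1) - p i) * algebraMap ℂ A z * (p (i+1) - p i)
            = algebraMap ℂ A z * (p (i+1) - p i) := by
          rw [← Algebra.commutes z (p (i+1) - p i), mul_assoc, heidem i hi']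
        rw [show (p (i+1) - p i) * (algebraMap ℂ A z - T) * (p (i+1) - p i)
            = (p (i+1) - p i) * algebraMap ℂ A z * (p (i+1) - p i)
              - (p (i+1) - p i) * T * (p (i+1) - p i) from by noncomm_ring, h2]
      rw [Finset.sum_congr rfl hterm, Finset.sum_sub_distrib, ← Finset.mul_sum,
        Finset.sum_range_sub (fun i => p i), hpn, hp0, sub_zero, mul_one, hS']
    rw [key_tri hA n p hp0 hpn hchain _ hxt, hdiagS]
  ext z
  simp only [spectrum.mem_iff]
  rw [not_iff_not]
  exact (main z).symm
end

section
/- Let A be a unital algebra over ℂ, let T ∈ A, let 0 = p₀, p₁, …, pₙ = 1 be idempotents in A with pⱼpₖ = p_{min(j,k)} for all j, k such that each pⱼ is T-invariant (Tpⱼ = pⱼTpⱼ), and set eⱼ = pⱼ − p_{j−1} and S = Σ_{j=1}^n eⱼ T eⱼ. Then for every polynomial q with complex coefficients, q(S) = Σ_{j=1}^n eⱼ q(T) eⱼ. -/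
open Finset Polynomial

section aux
variable {A : Type*} [Ring A] [Algebra ℂ A]

omit [Algebra ℂ A] in
/-- invariance is closed under multiplication -/
lemma aux_inv_mul {p X Y : A} (hX : X * p = p * X * p) (hY : Y * p = p * Y * p) :
    (X * Y) * p = p * (X * Y) * p := by
  calc X * Y * p = X * (p * Y * p) := by rw [mul_assoc, hY]
    _ = (X * p) * (Y * p) := by simp only [mul_assoc]
    _ = (p * X * p) * (Y * p) := by rw [hX]
    _ = p * X * (p * Y * p) := by simp only [mul_assoc]
    _ = p * X * (Y * p) := by rw [hY]
    _ = p * (X * Y) * p := by simp only [mul_assoc]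

end aux

/-- Let `A` be a unital `ℂ`-algebra, `T ∈ A`, let `0 = p₀, p₁, …, pₙ = 1` be an increasing
chain of `T`-invariant idempotents (`pⱼpₖ = p_{min(j,k)}`), and set `eⱼ = pⱼ - p_{j-1}` and
`S = Σⱼ eⱼ T eⱼ`. Then for every polynomial `q` with complex coefficients,
`q(S) = Σⱼ eⱼ q(T) eⱼ`. -/
theorem stmt_14 {A : Type*} [Ring A] [Algebra ℂ A]
    (T : A) (n : ℕ) (p : ℕ → A) (hp0 : p 0 = 0) (hpn : p n = 1)
    (hchain : ∀ j k, j ≤ n → k ≤ n → p j * p k = p (min j k))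
    (hTp : ∀ j ≤ n, T * p j = p j * T * p j)
    (S : A) (hS : S = ∑ j ∈ Finset.Icc 1 n, (p j - p (j - 1)) * T * (p j - p (j - 1)))
    (q : Polynomial ℂ) :
    Polynomial.aeval S q =
      ∑ j ∈ Finset.Icc 1 n, (p j - p (j - 1)) * Polynomial.aeval T q * (p j - p (j - 1)) := by
  set e : ℕ → A := fun j => p j - p (j - 1) with he
  -- orthogonality
  have horth : ∀ j ∈ Icc 1 n, ∀ k ∈ Icc 1 n, e j * e k = if j = k then e j else 0 := by
    intro j hj k hk
    simp only [mem_Icc] at hj hk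
    have hj1 : j - 1 ≤ n := le_trans (Nat.sub_le _ _) hj.2
    have hk1 : k - 1 ≤ n := le_trans (Nat.sub_le _ _) hk.2
    simp only [he, sub_mul, mul_sub, hchain _ _ hj.2 hk.2, hchain _ _ hj.2 hk1,
      hchain _ _ hj1 hk.2, hchain _ _ hj1 hk1]
    rcases lt_trichotomy j k with h | h | h
    · have h1 : j ≤ k - 1 := Nat.le_sub_one_of_lt h
      rw [if_neg h.ne]
      rw [min_eq_left h.le, min_eq_left h1, min_eq_left (le_trans (Nat.sub_le _ _) h.le),
        min_eq_left (le_trans (Nat.sub_le _ _) h1)]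
      abel
    · subst h
      rw [if_pos rfl, min_self, min_eq_right (Nat.sub_le _ _), min_eq_left (Nat.sub_le _ _), min_self]
      abel
    · have h1 : k ≤ j - 1 := Nat.le_sub_one_of_lt h
      rw [if_neg h.ne']
      rw [min_eq_right h.le, min_eq_right h1, min_eq_right (le_trans (Nat.sub_le _ _) h.le),
        min_eq_right (le_trans (Nat.sub_le _ _) h1)]
      abel
  -- sum to one
  have hsum : ∑ j ∈ Icc 1 n, e j = 1 := by
    have key : ∀ m : ℕ, ∑ j ∈ Icc 1 m, e j = p m - p 0 := by
      intro m
      induction m with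
      | zero => simp [he]
      | succ m ih =>
          rw [Finset.sum_Icc_succ_top (Nat.succ_le_succ (Nat.zero_le m)), ih]
          simp only [he, Nat.add_sub_cancel]
          abel
    rw [key n, hpn, hp0, sub_zero]
  -- invariance of aeval T q
  have hinv : ∀ r : Polynomial ℂ, ∀ l ≤ n, (aeval T r) * p l = p l * (aeval T r) * p l := by
    intro r
    induction r using Polynomial.induction_on with
    | C a =>
        intro l hl
        have hid : p l * p l = p l := by rw [hchain l l hl hl, min_self]
        simp only [aeval_C]
        conv_lhs => rw [← hid]
        rw [← mul_assoc, Algebra.commutes]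
    | add r s hr hs =>
        intro l hl
        simp only [map_add, add_mul, mul_add, hr l hl, hs l hl]
    | monomial m a hr =>
        intro l hl
        have h1 : aeval T (Polynomial.C a * Polynomial.X ^ (m + 1))
            = aeval T (Polynomial.C a * Polynomial.X ^ m) * T := by
          simp [pow_succ, mul_assoc]
        rw [h1]
        exact aux_inv_mul (hr l hl) (hTp l hl)
  -- lower blocks vanish
  have hep : ∀ j k, 1 ≤ j → j ≤ n → k < j → e j * p k = 0 := by
    intro j k hj1 hjn hkj
    have hk : k ≤ n := le_trans hkj.le hjn
    have hj1n : j - 1 ≤ n := le_trans (Nat.sub_le _ _) hjn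
    have hk1 : k ≤ j - 1 := Nat.le_sub_one_of_lt hkj
    simp only [he, sub_mul, hchain _ _ hjn hk, hchain _ _ hj1n hk,
      min_eq_right hkj.le, min_eq_right hk1, sub_self]
  have hlow : ∀ X : A, (∀ l ≤ n, X * p l = p l * X * p l) →
      ∀ j k, 1 ≤ j → j ≤ n → 1 ≤ k → k ≤ n → k < j → e j * X * e k = 0 := by
    intro X hX j k hj1 hjn hk1 hkn hkj
    have hXk := hX k hkn
    have hXk1 := hX (k - 1) (le_trans (Nat.sub_le _ _) hkn)
    have : e j * X * e k = e j * (X * p k) - e j * (X * p (k - 1)) := by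
      simp only [he, mul_sub, mul_assoc]
    rw [this, hXk, hXk1, ← mul_assoc, ← mul_assoc,
      ← mul_assoc (e j), ← mul_assoc (e j),
      hep j k hj1 hjn hkj, hep j (k - 1) hj1 hjn (lt_of_le_of_lt (Nat.sub_le _ _) hkj)]
    simp
  -- main induction
  subst hS
  induction q using Polynomial.induction_on with
  | C a =>
      simp only [aeval_C]
      have : ∀ j ∈ Icc 1 n, e j * algebraMap ℂ A a * e j = algebraMap ℂ A a * (e j * e j) := by
        intro j hj
        rw [mul_assoc, Algebra.commutes a (e j), ← mul_assoc]
        exact (Algebra.commutes a _).symm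
      rw [Finset.sum_congr rfl this, ← Finset.mul_sum]
      have : ∑ j ∈ Icc 1 n, e j * e j = 1 := by
        rw [Finset.sum_congr rfl (fun j hj => by rw [horth j hj j hj, if_pos rfl]), hsum]
      rw [this, mul_one]
  | add r s hr hs =>
      simp only [map_add, add_mul, mul_add, hr, hs, Finset.sum_add_distrib]
  | monomial m a hr =>
      have h1 : ∀ x : A, aeval x (Polynomial.C a * Polynomial.X ^ (m + 1))
          = aeval x (Polynomial.C a * Polynomial.X ^ m) * x := by
        intro x; simp [pow_succ, mul_assoc]
      set Q : A := aeval T (Polynomial.C a * Polynomial.X ^ m) with hQ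
      rw [h1, h1, hr, Finset.sum_mul]
      refine Finset.sum_congr rfl fun j hj => ?_
      simp only [mem_Icc] at hj
      rw [Finset.mul_sum]
      -- ∑ k, (e j * Q * e j) * (e k * T * e k) = e j * (Q * T) * e j
      have hdiag : ∀ k ∈ Icc 1 n, e j * Q * e j * (e k * T * e k)
          = if k = j then e j * Q * e j * T * e j else 0 := by
        intro k hk
        split_ifs with h
        · rw [h]
          have : e j * e j = e j := by
            rw [horth j (mem_Icc.mpr hj) j (mem_Icc.mpr hj), if_pos rfl]
          calc e j * Q * e j * (e j * T * e j) = e j * Q * (e j * e j) * T * e j := by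
                simp only [mul_assoc]
            _ = e j * Q * e j * T * e j := by rw [this]
        · have : e j * e k = 0 := by
            rw [horth j (mem_Icc.mpr hj) k hk, if_neg (fun hh => h hh.symm)]
          calc e j * Q * e j * (e k * T * e k) = e j * Q * ((e j * e k) * (T * e k)) := by
                simp only [mul_assoc]
            _ = 0 := by rw [this]; simp
      rw [Finset.sum_congr rfl hdiag, Finset.sum_ite_eq' (Icc 1 n) j
        (fun _ => e j * Q * e j * T * e j), if_pos (mem_Icc.mpr hj)]
      -- now show e j * Q * e j * T * e j = e j * (Q * T) * e j
      have hone : e j * Q * T * e j = ∑ k ∈ Icc 1 n, e j * Q * (e k * (T * e j)) := by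
        calc e j * Q * T * e j = e j * Q * ((∑ k ∈ Icc 1 n, e k) * (T * e j)) := by
              rw [hsum]; simp only [one_mul, mul_assoc]
          _ = _ := by rw [Finset.sum_mul, Finset.mul_sum]
      have hterm : ∀ k ∈ Icc 1 n, e j * Q * (e k * (T * e j))
          = if k = j then e j * Q * e j * T * e j else 0 := by
        intro k hk
        simp only [mem_Icc] at hk
        split_ifs with h
        · rw [h]; simp only [mul_assoc]
        · rcases lt_or_gt_of_ne h with hlt | hgt
          · -- k < j : e j * Q * e k = 0
            have hz : e j * Q * e k = 0 :=
              hlow Q (hinv _) j k hj.1 hj.2 hk.1 hk.2 hlt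
            calc e j * Q * (e k * (T * e j)) = (e j * Q * e k) * (T * e j) := by
                  simp only [mul_assoc]
              _ = 0 := by rw [hz, zero_mul]
          · -- k > j : e k * T * e j = 0
            have hz : e k * T * e j = 0 :=
              hlow T hTp k j hk.1 hk.2 hj.1 hj.2 hgt
            have hz' : e k * (T * e j) = 0 := by rw [← mul_assoc, hz]
            rw [hz', mul_zero]
      have : e j * Q * T * e j = e j * Q * e j * T * e j := by
        rw [hone, Finset.sum_congr rfl hterm, Finset.sum_ite_eq' (Icc 1 n) j
          (fun _ => e j * Q * e j * T * e j), if_pos (mem_Icc.mpr hj)]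
      rw [← this]; simp only [mul_assoc]; rfl
end

section
/- Let H be a complex Hilbert space, let N and Q be bounded linear operators on H with NQ = QN, and set T = N + Q. Let R > max(‖T‖, ‖N‖) and let h : ℂ → ℂ be differentiable on a neighborhood of the closed disc of radius R centered at 0. Then the operators h(T) := (2πi)⁻¹ ∮_{|λ|=R} h(λ)(λ·I − T)⁻¹ dλ and h(N) := (2πi)⁻¹ ∮_{|λ|=R} h(λ)(λ·I − N)⁻¹ dλ (circle contour integrals of the operator-valued resolvents) satisfy h(T) − h(N) = A·Q = Q·A, where A = (2πi)⁻¹ ∮_{|λ|=R} h(λ)(λ·I − T)⁻¹(λ·I − N)⁻¹ dλ. -/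
open Complex Metric

section aux
variable {A : Type*} [NormedRing A] [NormedAlgebra ℂ A] [CompleteSpace A]

lemma aux_isUnit (x : A) (z : ℂ) (hz : ‖x‖ < ‖z‖) : IsUnit (z • (1 : A) - x) := by
  have hz0 : z ≠ 0 := by rintro rfl; simp at hz; linarith [norm_nonneg x]
  have := IsUnit.smul_sub_iff_sub_inv_smul (Units.mk0 z hz0) x
  rw [Units.smul_def, Units.val_mk0] at this
  rw [this]
  refine (Units.oneSub _ ?_).isUnit
  rw [Units.smul_def, Units.val_inv_eq_inv_val, Units.val_mk0, norm_smul, norm_inv]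
  rw [inv_mul_lt_iff₀ (lt_of_le_of_lt (norm_nonneg x) hz), mul_one]
  exact hz

omit [NormedAlgebra ℂ A] [CompleteSpace A] in
lemma aux_commute_inverse {a b : A} (hab : Commute a b) (hb : IsUnit b) :
    Commute a (Ring.inverse b) := by
  rw [← hb.unit_spec] at hab ⊢
  rw [Ring.inverse_unit]
  exact hab.units_inv_right

lemma aux_cont_inv (x : A) {R : ℝ} (hx : ‖x‖ < R) :
    ContinuousOn (fun z : ℂ => Ring.inverse (z • (1 : A) - x)) (sphere (0 : ℂ) R) := by
  intro z hz
  rw [mem_sphere_zero_iff_norm] at hz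
  have hu := aux_isUnit x z (by rw [hz]; exact hx)
  refine ContinuousAt.continuousWithinAt ?_
  have h1 : ContinuousAt (fun z : ℂ => z • (1 : A) - x) z := by fun_prop
  have h2 := NormedRing.inverse_continuousAt hu.unit
  rw [hu.unit_spec] at h2
  exact ContinuousAt.comp (f := fun z : ℂ => z • (1 : A) - x) h2 h1

end aux

lemma aux_circleIntegral_clm {E F : Type*} [NormedAddCommGroup E] [NormedSpace ℂ E]
    [CompleteSpace E] [NormedAddCommGroup F] [NormedSpace ℂ F] [CompleteSpace F]
    (L : E →L[ℂ] F) {f : ℂ → E} {c : ℂ} {R : ℝ} (hf : CircleIntegrable f c R) :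
    (∮ z in C(c, R), L (f z)) = L (∮ z in C(c, R), f z) := by
  rw [circleIntegral, circleIntegral, ← L.intervalIntegral_comp_comm hf.out]
  simp [L.map_smul]

/-- Let `N, Q` be bounded operators on a complex Hilbert space with `NQ = QN`, `T = N + Q`,
`R > max(‖T‖, ‖N‖)`, and `h` holomorphic on a neighborhood of the closed disc of radius `R`.
With `h(T)`, `h(N)` and `A` defined by the contour integrals of the resolvents over the
circle `|λ| = R`, one has `h(T) - h(N) = A·Q = Q·A`. -/
theorem stmt_16 {H : Type*} [NormedAddCommGroup H] [InnerProductSpace ℂ H] [CompleteSpace H]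
    (N Q : H →L[ℂ] H) (hNQ : N * Q = Q * N) (T : H →L[ℂ] H) (hT : T = N + Q)
    (R : ℝ) (hR : max ‖T‖ ‖N‖ < R) (h : ℂ → ℂ)
    (hh : ∃ s : Set ℂ, IsOpen s ∧ Metric.closedBall (0 : ℂ) R ⊆ s ∧ DifferentiableOn ℂ h s)
    (hTop hNop A : H →L[ℂ] H)
    (hhT : hTop = (2 * (Real.pi : ℂ) * Complex.I)⁻¹ •
      ∮ z in C(0, R), h z • Ring.inverse (z • (1 : H →L[ℂ] H) - T))
    (hhN : hNop = (2 * (Real.pi : ℂ) * Complex.I)⁻¹ •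
      ∮ z in C(0, R), h z • Ring.inverse (z • (1 : H →L[ℂ] H) - N))
    (hA : A = (2 * (Real.pi : ℂ) * Complex.I)⁻¹ •
      ∮ z in C(0, R), h z •
        (Ring.inverse (z • (1 : H →L[ℂ] H) - T) * Ring.inverse (z • (1 : H →L[ℂ] H) - N))) :
    hTop - hNop = A * Q ∧ A * Q = Q * A := by
  have hT' : ‖T‖ < R := (le_max_left _ _).trans_lt hR
  have hN' : ‖N‖ < R := (le_max_right _ _).trans_lt hR
  have hR0 : 0 ≤ R := (norm_nonneg T).trans hT'.le
  obtain ⟨s, hs_open, hs_sub, hs_diff⟩ := hh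
  have hcont_h : ContinuousOn h (sphere (0 : ℂ) R) :=
    hs_diff.continuousOn.mono (subset_trans sphere_subset_closedBall hs_sub)
  set fT : ℂ → (H →L[ℂ] H) := fun z => h z • Ring.inverse (z • (1 : H →L[ℂ] H) - T) with hfT
  set fN : ℂ → (H →L[ℂ] H) := fun z => h z • Ring.inverse (z • (1 : H →L[ℂ] H) - N) with hfN
  set fA : ℂ → (H →L[ℂ] H) := fun z =>
    h z • (Ring.inverse (z • (1 : H →L[ℂ] H) - T) * Ring.inverse (z • (1 : H →L[ℂ] H) - N)) with hfA
  have iT : CircleIntegrable fT 0 R :=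
    (hcont_h.smul (aux_cont_inv T hT')).circleIntegrable hR0
  have iN : CircleIntegrable fN 0 R :=
    (hcont_h.smul (aux_cont_inv N hN')).circleIntegrable hR0
  have iA : CircleIntegrable fA 0 R :=
    (hcont_h.smul ((aux_cont_inv T hT').mul (aux_cont_inv N hN'))).circleIntegrable hR0
  -- commutation facts
  have hQT : Commute Q T := by
    rw [hT]; simp only [Commute, SemiconjBy, mul_add, add_mul, hNQ]
  have hQN : Commute Q N := hNQ.symm
  -- pointwise identities on the sphere
  have key : ∀ z ∈ sphere (0 : ℂ) R,
      fT z - fN z = fA z * Q ∧ fA z * Q = Q * fA z := by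
    intro z hz
    rw [mem_sphere_zero_iff_norm] at hz
    have huT : IsUnit (z • (1 : H →L[ℂ] H) - T) := aux_isUnit T z (hz ▸ hT')
    have huN : IsUnit (z • (1 : H →L[ℂ] H) - N) := aux_isUnit N z (hz ▸ hN')
    have hcT : Commute Q (z • (1 : H →L[ℂ] H) - T) := by
      refine Commute.sub_right ?_ hQT
      exact (Commute.one_right Q).smul_right z
    have hcN : Commute Q (z • (1 : H →L[ℂ] H) - N) := by
      refine Commute.sub_right ?_ hQN
      exact (Commute.one_right Q).smul_right z
    have hiT : Commute Q (Ring.inverse (z • (1 : H →L[ℂ] H) - T)) := aux_commute_inverse hcT huT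
    have hiN : Commute Q (Ring.inverse (z • (1 : H →L[ℂ] H) - N)) := aux_commute_inverse hcN huN
    have main : Ring.inverse (z • (1 : H →L[ℂ] H) - T) - Ring.inverse (z • (1 : H →L[ℂ] H) - N)
        = (Ring.inverse (z • (1 : H →L[ℂ] H) - T) * Ring.inverse (z • (1 : H →L[ℂ] H) - N)) * Q := by
      have e1 : (z • (1 : H →L[ℂ] H) - N) - (z • (1 : H →L[ℂ] H) - T) = Q := by
        rw [hT]; abel
      calc Ring.inverse (z • (1 : H →L[ℂ] H) - T) - Ring.inverse (z • (1 : H →L[ℂ] H) - N)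
          = Ring.inverse (z • (1 : H →L[ℂ] H) - T) * ((z • (1 : H →L[ℂ] H) - N) - (z • (1 : H →L[ℂ] H) - T))
              * Ring.inverse (z • (1 : H →L[ℂ] H) - N) := by
            rw [mul_sub, sub_mul, mul_assoc, Ring.mul_inverse_cancel _ huN, mul_one,
              Ring.inverse_mul_cancel _ huT, one_mul]
        _ = Ring.inverse (z • (1 : H →L[ℂ] H) - T) * Q * Ring.inverse (z • (1 : H →L[ℂ] H) - N) := by rw [e1]
        _ = Ring.inverse (z • (1 : H →L[ℂ] H) - T) * Ring.inverse (z • (1 : H →L[ℂ] H) - N) * Q := by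
            rw [mul_assoc, hiN.eq, mul_assoc]
    constructor
    · simp only [hfT, hfN, hfA, ← smul_sub, main, smul_mul_assoc]
    · simp only [hfA, smul_mul_assoc, mul_smul_comm]
      rw [mul_assoc, ← hiN.eq, ← mul_assoc, ← hiT.eq, mul_assoc]
  -- pull things out of integrals
  set LR : (H →L[ℂ] H) →L[ℂ] (H →L[ℂ] H) := (ContinuousLinearMap.mul ℂ (H →L[ℂ] H)).flip Q with hLR
  set LL : (H →L[ℂ] H) →L[ℂ] (H →L[ℂ] H) := ContinuousLinearMap.mul ℂ (H →L[ℂ] H) Q with hLL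
  have hLRapp : ∀ x : H →L[ℂ] H, LR x = x * Q := fun x => rfl
  have hLLapp : ∀ x : H →L[ℂ] H, LL x = Q * x := fun x => rfl
  have int1 : (∮ z in C(0, R), fT z) - (∮ z in C(0, R), fN z)
      = (∮ z in C(0, R), fA z) * Q := by
    calc (∮ z in C(0, R), fT z) - (∮ z in C(0, R), fN z)
        = ∮ z in C(0, R), (fT z - fN z) := (circleIntegral.integral_sub iT iN).symm
      _ = ∮ z in C(0, R), LR (fA z) :=
          circleIntegral.integral_congr hR0 fun z hz => (key z hz).1
      _ = LR (∮ z in C(0, R), fA z) := aux_circleIntegral_clm LR iA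
  have int2 : (∮ z in C(0, R), fA z) * Q = Q * (∮ z in C(0, R), fA z) := by
    calc (∮ z in C(0, R), fA z) * Q
        = ∮ z in C(0, R), LR (fA z) := (aux_circleIntegral_clm LR iA).symm
      _ = ∮ z in C(0, R), LL (fA z) :=
          circleIntegral.integral_congr hR0 fun z hz => (key z hz).2
      _ = Q * ∮ z in C(0, R), fA z := aux_circleIntegral_clm LL iA
  constructor
  · rw [hhT, hhN, hA, ← smul_sub, int1, smul_mul_assoc]
  · rw [hA, smul_mul_assoc, int2, mul_smul_comm]
end
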